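/- arXiv:1803.05324 — 4 statements merged into one kernel-verified Lean document; each statement's English description precedes it below -/
import Mathlib

section
/- Let n ≥ 1 and let p₁,…,pₙ ≥ 2 be integers. Then the Newton number of F₀ = {p₁e₁,…,pₙeₙ} satisfies ν(F₀) = ∏_{k=1}^{n} (p_k − 1). -/
open MeasureTheory

/-- The Newton polyhedron `Γ₊(F)` of a finite set `F ⊆ ℕⁿ` of lattice points:
the convex hull of `⋃_{a ∈ F} (a + ℝ≥0ⁿ)`. -/
noncomputable def newtonPolyhedron {n : ℕ} (F : Finset (Fin n → ℕ)) :
    Set (Fin n → ℝ) :=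
  convexHull ℝ (⋃ a ∈ F, {x : Fin n → ℝ | ∀ k, (a k : ℝ) ≤ x k})

/-- `V_I(F)`: the `|I|`-dimensional Lebesgue measure (computed inside the
coordinate subspace `ℝ^I`) of the set of points of the nonnegative orthant of
`ℝ^I` that do not belong to `Γ₊(F_I)`, where
`F_I = {a ∈ F : aₖ = 0 for all k ∉ I}`.  For `I = ∅` this equals `1`
(whenever `0 ∉ F`). -/
noncomputable def newtonVolume {n : ℕ} (F : Finset (Fin n → ℕ))
    (I : Finset (Fin n)) : ℝ :=
  (volume {x : {k // k ∈ I} → ℝ |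
      (∀ j, 0 ≤ x j) ∧
      (fun k => if h : k ∈ I then x ⟨k, h⟩ else 0) ∉
        newtonPolyhedron (F.filter fun a => ∀ k, k ∉ I → a k = 0)}).toReal

/-- The Newton number `ν(F) = Σ_{I ⊆ {1,…,n}} (−1)^{n−|I|} |I|! V_I(F)`. -/
noncomputable def newtonNumber {n : ℕ} (F : Finset (Fin n → ℕ)) : ℝ :=
  ∑ I : Finset (Fin n),
    (-1 : ℝ) ^ (n - I.card) * (Nat.factorial I.card : ℝ) * newtonVolume F I

lemma simplex_vol_fin : ∀ (n : ℕ) (q : Fin n → ℝ), (∀ i, 0 < q i) → ∀ (c : ℝ), 0 < c →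
    volume {x : Fin n → ℝ | (∀ i, 0 ≤ x i) ∧ ∑ i, x i / q i < c}
      = ENNReal.ofReal (c ^ n / n.factorial * ∏ i, q i) := by
  intro n
  induction n with
  | zero =>
    intro q hq c hc
    have : {x : Fin 0 → ℝ | (∀ i, 0 ≤ x i) ∧ ∑ i, x i / q i < c} = Set.univ := by
      ext x; simp [hc]
    rw [this]
    rw [volume_pi, Measure.pi_univ]; simp
  | succ n ih =>
    intro q hq c hc
    have hq0 : 0 < q 0 := hq 0
    set T : Set (ℝ × (Fin n → ℝ)) :=
      {y | (0 ≤ y.1 ∧ ∀ i, 0 ≤ y.2 i) ∧ y.1 / q 0 + ∑ i, y.2 i / q i.succ < c} with hT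
    have hTmeas : MeasurableSet T := by
      rw [hT]
      simp only [Set.setOf_and]
      refine (MeasurableSet.inter ?_ ?_).inter ?_
      · exact measurableSet_le measurable_const measurable_fst
      · rw [Set.setOf_forall]
        exact MeasurableSet.iInter fun i =>
          measurableSet_le measurable_const (measurable_snd.eval (a := i))
      · refine measurableSet_lt (Measurable.add (measurable_fst.div_const _) ?_) measurable_const
        exact Finset.measurable_sum _ fun i _ =>
          (measurable_snd.eval (a := i)).div_const _
    have hpre : (MeasurableEquiv.piFinSuccAbove (fun _ : Fin (n+1) => ℝ) 0) ⁻¹' T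
        = {x : Fin (n+1) → ℝ | (∀ i, 0 ≤ x i) ∧ ∑ i, x i / q i < c} := by
      ext x
      simp only [Set.mem_preimage, MeasurableEquiv.piFinSuccAbove_apply, hT,
        Set.mem_setOf_eq, Fin.insertNthEquiv, Fin.sum_univ_succ, Fin.forall_fin_succ]
      constructor
      · rintro ⟨⟨h0, hs⟩, hlt⟩
        exact ⟨⟨h0, fun i => by simpa [Fin.tail] using hs i⟩, by simpa [Fin.tail] using hlt⟩
      · rintro ⟨⟨h0, hs⟩, hlt⟩
        exact ⟨⟨h0, fun i => by simpa [Fin.tail] using hs i⟩, by simpa [Fin.tail] using hlt⟩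
    have key : volume {x : Fin (n+1) → ℝ | (∀ i, 0 ≤ x i) ∧ ∑ i, x i / q i < c}
        = (volume.prod volume) T := by
      rw [← hpre]
      exact (volume_preserving_piFinSuccAbove (fun _ : Fin (n+1) => ℝ) 0).measure_preimage
        hTmeas.nullMeasurableSet
    rw [key, Measure.prod_apply hTmeas]
    have hslice : ∀ t : ℝ, volume (Prod.mk t ⁻¹' T)
        = (Set.Ico (0:ℝ) (c * q 0)).indicator
            (fun s : ℝ => ENNReal.ofReal ((c - s / q 0) ^ n / n.factorial * ∏ i : Fin n, q i.succ)) t := by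
      intro t
      by_cases ht : 0 ≤ t ∧ t < c * q 0
      · have hc' : 0 < c - t / q 0 := by
          rw [sub_pos, div_lt_iff₀ hq0]
          linarith [ht.2]
        have hset : Prod.mk t ⁻¹' T
            = {y : Fin n → ℝ | (∀ i, 0 ≤ y i) ∧ ∑ i, y i / q i.succ < c - t / q 0} := by
          ext y
          simp only [Set.mem_preimage, hT, Set.mem_setOf_eq, ht.1, true_and]
          rw [lt_sub_iff_add_lt']
        rw [hset, ih _ (fun i => hq i.succ) _ hc', Set.indicator_of_mem (Set.mem_Ico.mpr ⟨ht.1, ht.2⟩)]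
      · have hset : Prod.mk t ⁻¹' T = ∅ := by
          ext y
          simp only [Set.mem_preimage, hT, Set.mem_setOf_eq, Set.mem_empty_iff_false,
            iff_false, not_and]
          rintro ⟨h0, hy⟩
          push_neg at ht
          have h2 := ht h0
          have hsum : 0 ≤ ∑ i, y i / q i.succ :=
            Finset.sum_nonneg fun i _ => div_nonneg (hy i) (hq i.succ).le
          have : c ≤ t / q 0 := by
            rw [le_div_iff₀ hq0]; linarith
          linarith
        rw [hset, Set.indicator_of_notMem]
        · simp
        · intro hmem
          exact ht ⟨hmem.1, hmem.2⟩
    simp_rw [hslice]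
    rw [lintegral_indicator measurableSet_Ico _]
    have hcont : Continuous fun t : ℝ => (c - t / q 0) ^ n / n.factorial * ∏ i : Fin n, q i.succ := by
      fun_prop
    have hint : IntegrableOn (fun t : ℝ => (c - t / q 0) ^ n / n.factorial * ∏ i : Fin n, q i.succ)
        (Set.Ico 0 (c * q 0)) volume := by
      exact hcont.integrableOn_Icc.mono_set Set.Ico_subset_Icc_self
    have hnn : 0 ≤ᵐ[volume.restrict (Set.Ico 0 (c * q 0))]
        fun t : ℝ => (c - t / q 0) ^ n / n.factorial * ∏ i : Fin n, q i.succ := by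
      filter_upwards [ae_restrict_mem measurableSet_Ico] with t ht
      have hc' : 0 ≤ c - t / q 0 := by
        rw [sub_nonneg, div_le_iff₀ hq0]
        linarith [ht.2]
      have : (0:ℝ) ≤ ∏ i : Fin n, q i.succ := Finset.prod_nonneg fun i _ => (hq i.succ).le
      positivity
    rw [← ofReal_integral_eq_lintegral_ofReal hint hnn]
    congr 1
    rw [MeasureTheory.integral_Ico_eq_integral_Ioo, ← MeasureTheory.integral_Ioc_eq_integral_Ioo,
      ← intervalIntegral.integral_of_le (by positivity : (0:ℝ) ≤ c * q 0)]
    have h1 : ∫ t in (0:ℝ)..(c * q 0), (c - t / q 0) ^ n / n.factorial * ∏ i : Fin n, q i.succ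
        = (∫ t in (0:ℝ)..(c * q 0), (c - t / q 0) ^ n) * ((n.factorial:ℝ)⁻¹ * ∏ i : Fin n, q i.succ) := by
      rw [← intervalIntegral.integral_mul_const]
      congr 1; ext t; ring
    rw [h1]
    have h2 : ∫ t in (0:ℝ)..(c * q 0), (c - t / q 0) ^ n
        = q 0 • ∫ u in ((0:ℝ)/q 0)..((c * q 0)/q 0), (c - u) ^ n :=
      intervalIntegral.integral_comp_div (fun u => (c - u) ^ n) hq0.ne'
    rw [h2, zero_div, mul_div_assoc, div_self hq0.ne', mul_one]
    rw [intervalIntegral.integral_comp_sub_left (fun u => u ^ n) c]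
    rw [sub_self, sub_zero, integral_pow]
    rw [Fin.prod_univ_succ, Nat.factorial_succ]
    have hfn : (n.factorial : ℝ) ≠ 0 := Nat.cast_ne_zero.mpr n.factorial_ne_zero
    have hn1 : (n:ℝ) + 1 ≠ 0 := by positivity
    have hn1' : 1 + (n:ℝ) ≠ 0 := by positivity
    push_cast
    field_simp
    ring_nf
    field_simp
    ring

lemma simplex_vol {ι : Type*} [Fintype ι] (q : ι → ℝ) (hq : ∀ i, 0 < q i) :
    volume {x : ι → ℝ | (∀ i, 0 ≤ x i) ∧ ∑ i, x i / q i < 1}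
      = ENNReal.ofReal ((1:ℝ) / (Fintype.card ι).factorial * ∏ i, q i) := by
  classical
  set e : Fin (Fintype.card ι) ≃ ι := (Fintype.equivFin ι).symm
  have hS : MeasurableSet {x : ι → ℝ | (∀ i, 0 ≤ x i) ∧ ∑ i, x i / q i < 1} := by
    simp only [Set.setOf_and]
    refine MeasurableSet.inter ?_ ?_
    · rw [Set.setOf_forall]
      exact MeasurableSet.iInter fun i =>
        measurableSet_le measurable_const (measurable_pi_apply i)
    · exact measurableSet_lt
        (Finset.measurable_sum _ fun i _ => (measurable_pi_apply i).div_const _)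
        measurable_const
  have mp := volume_measurePreserving_piCongrLeft (fun _ : ι => ℝ) e
  rw [← mp.measure_preimage hS.nullMeasurableSet]
  have hpre : (MeasurableEquiv.piCongrLeft (fun _ : ι => ℝ) e) ⁻¹'
      {x : ι → ℝ | (∀ i, 0 ≤ x i) ∧ ∑ i, x i / q i < 1}
      = {x : Fin (Fintype.card ι) → ℝ | (∀ i, 0 ≤ x i) ∧ ∑ i, x i / q (e i) < 1} := by
    ext x
    simp only [Set.mem_preimage, Set.mem_setOf_eq]
    constructor
    · rintro ⟨h1, h2⟩
      refine ⟨fun i => ?_, ?_⟩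
      · have := h1 (e i)
        rwa [MeasurableEquiv.coe_piCongrLeft, Equiv.piCongrLeft_apply_apply] at this
      · rw [← Equiv.sum_comp e (fun i => (MeasurableEquiv.piCongrLeft (fun _ : ι => ℝ) e) x i / q i)] at h2
        simp only [MeasurableEquiv.coe_piCongrLeft, Equiv.piCongrLeft_apply_apply] at h2
        exact h2
    · rintro ⟨h1, h2⟩
      refine ⟨fun i => ?_, ?_⟩
      · obtain ⟨i', rfl⟩ := e.surjective i
        rw [MeasurableEquiv.coe_piCongrLeft, Equiv.piCongrLeft_apply_apply]
        exact h1 i'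
      · rw [← Equiv.sum_comp e (fun i => (MeasurableEquiv.piCongrLeft (fun _ : ι => ℝ) e) x i / q i)]
        simp only [MeasurableEquiv.coe_piCongrLeft, Equiv.piCongrLeft_apply_apply]
        exact h2
  rw [hpre, simplex_vol_fin _ _ (fun i => hq (e i)) 1 one_pos, Equiv.prod_comp e q]
  norm_num

lemma mem_newton_iff (n : ℕ) (p : Fin n → ℕ) (hp : ∀ k, 2 ≤ p k) (I : Finset (Fin n))
    (y : Fin n → ℝ) (hy : ∀ j, 0 ≤ y j) :
    y ∈ newtonPolyhedron (((Finset.univ : Finset (Fin n)).image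
        (fun k : Fin n => Pi.single k (p k))).filter fun a => ∀ k, k ∉ I → a k = 0)
      ↔ 1 ≤ ∑ k ∈ I, y k / p k := by
  classical
  have hpp : ∀ k : Fin n, (0:ℝ) < p k := fun k => by
    have := hp k; positivity
  have hfil : (((Finset.univ : Finset (Fin n)).image
      (fun k : Fin n => Pi.single k (p k))).filter fun a => ∀ k, k ∉ I → a k = 0)
      = I.image (fun k => Pi.single k (p k)) := by
    ext a
    simp only [Finset.mem_filter, Finset.mem_image, Finset.mem_univ, true_and]
    constructor
    · rintro ⟨⟨k, rfl⟩, h⟩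
      refine ⟨k, ?_, rfl⟩
      by_contra hk
      have h2 := h k hk
      rw [Pi.single_eq_same] at h2
      have := hp k; omega
    · rintro ⟨k, hk, rfl⟩
      exact ⟨⟨k, rfl⟩, fun j hj => Pi.single_eq_of_ne (fun h => hj (by rw [h]; exact hk)) _⟩
  rw [hfil, newtonPolyhedron]
  constructor
  · intro hmem
    have hlin : IsLinearMap ℝ (fun z : Fin n → ℝ => ∑ k ∈ I, z k / (p k : ℝ)) := by
      constructor
      · intro a b; simp [add_div, Finset.sum_add_distrib]
      · intro c a; simp [Finset.mul_sum, smul_eq_mul, mul_div_assoc]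
    have hconv : Convex ℝ {z : Fin n → ℝ | 1 ≤ ∑ k ∈ I, z k / (p k : ℝ)} :=
      convex_halfSpace_ge hlin 1
    refine convexHull_min ?_ hconv hmem
    rintro x hx
    rw [Set.mem_iUnion₂] at hx
    obtain ⟨a, ha, hxa⟩ := hx
    rw [Finset.mem_image] at ha
    obtain ⟨k, hk, rfl⟩ := ha
    have h1 : (1:ℝ) = ∑ j ∈ I, ((Pi.single k (p k) : Fin n → ℕ) j : ℝ) / p j := by
      rw [Finset.sum_eq_single k]
      · rw [Pi.single_eq_same, div_self (hpp k).ne']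
      · intro j _ hj
        rw [Pi.single_eq_of_ne hj]
        simp
      · intro h; exact absurd hk h
    rw [Set.mem_setOf_eq, h1]
    refine Finset.sum_le_sum fun j _ => ?_
    gcongr
    exact hxa j
  · intro hs
    set s := ∑ k ∈ I, y k / p k with hsdef
    have hspos : (0:ℝ) < s := lt_of_lt_of_le one_pos hs
    set w : Fin n → ℝ := fun k => (y k / p k) / s with hwdef
    set t : Fin n → ℝ := fun j => y j - (if j ∈ I then y j / s else 0) with htdef
    have ht : ∀ j, 0 ≤ t j := by
      intro j
      simp only [htdef]
      split
      · have : y j / s ≤ y j := div_le_self (hy j) hs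
        linarith
      · simpa using hy j
    have hw : ∀ k ∈ I, 0 ≤ w k := fun k _ =>
      div_nonneg (div_nonneg (hy k) (hpp k).le) hspos.le
    have hwsum : ∑ k ∈ I, w k = 1 := by
      simp only [hwdef]
      rw [← Finset.sum_div, ← hsdef, div_self hspos.ne']
    have hyeq : y = ∑ k ∈ I, w k •
        (fun j => ((Pi.single k (p k) : Fin n → ℕ) j : ℝ) + t j) := by
      funext j
      rw [Finset.sum_apply]
      simp only [Pi.smul_apply, smul_eq_mul, mul_add]
      rw [Finset.sum_add_distrib, ← Finset.sum_mul, hwsum, one_mul]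
      have hsing : ∑ k ∈ I, w k * ((Pi.single k (p k) : Fin n → ℕ) j : ℝ)
          = if j ∈ I then y j / s else 0 := by
        split
        case isTrue hj =>
          rw [Finset.sum_eq_single j]
          · rw [Pi.single_eq_same, hwdef]
            rw [div_mul_eq_mul_div, div_mul_cancel₀ _ (hpp j).ne']
          · intro k _ hk
            rw [Pi.single_eq_of_ne (Ne.symm hk)]
            simp
          · intro h; exact absurd hj h
        case isFalse hj =>
          apply Finset.sum_eq_zero
          intro k hk
          rw [Pi.single_eq_of_ne (fun h => hj (by rw [h]; exact hk))]
          simp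
      rw [hsing]
      simp only [htdef]
      by_cases hj : j ∈ I <;> simp only [hj, if_true, if_false] <;> ring
    rw [hyeq, ← Finset.centerMass_eq_of_sum_1 _ _ hwsum]
    apply Finset.centerMass_mem_convexHull _ hw (by rw [hwsum]; norm_num)
    intro k hk
    rw [Set.mem_iUnion₂]
    refine ⟨Pi.single k (p k), ?_, fun j => ?_⟩
    · exact Finset.mem_image_of_mem _ hk
    · simpa using ht j

lemma newtonVolume_eq (n : ℕ) (p : Fin n → ℕ) (hp : ∀ k, 2 ≤ p k) (I : Finset (Fin n)) :
    newtonVolume (Finset.image (fun k : Fin n => Pi.single k (p k)) Finset.univ) I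
      = (∏ k ∈ I, (p k : ℝ)) / I.card.factorial := by
  classical
  rw [newtonVolume]
  have hset : {x : {k // k ∈ I} → ℝ |
      (∀ j, 0 ≤ x j) ∧
      (fun k => if h : k ∈ I then x ⟨k, h⟩ else 0) ∉
        newtonPolyhedron (((Finset.image (fun k : Fin n => Pi.single k (p k))
          Finset.univ)).filter fun a => ∀ k, k ∉ I → a k = 0)}
      = {x : {k // k ∈ I} → ℝ | (∀ j, 0 ≤ x j) ∧
          ∑ j : {k // k ∈ I}, x j / (p j.1 : ℝ) < 1} := by
    ext x
    simp only [Set.mem_setOf_eq]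
    by_cases hx : ∀ j, 0 ≤ x j
    · simp only [hx, true_and]
      set y : Fin n → ℝ := fun k => if h : k ∈ I then x ⟨k, h⟩ else 0 with hydef
      have hy : ∀ j, 0 ≤ y j := by
        intro j
        simp only [hydef]
        split
        · exact hx _
        · exact le_refl 0
      have hsum : ∑ k ∈ I, y k / (p k : ℝ) = ∑ j : {k // k ∈ I}, x j / (p j.1 : ℝ) := by
        rw [← Finset.sum_coe_sort I (fun k => y k / (p k : ℝ))]
        apply Finset.sum_congr rfl
        intro j _
        simp only [hydef, dif_pos j.2]
      rw [mem_newton_iff n p hp I y hy, hsum, not_le]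
    · constructor <;> (rintro ⟨h, -⟩; exact (hx h).elim)
  rw [hset, simplex_vol (fun j : {k // k ∈ I} => (p j.1 : ℝ))
    (fun j => by have := hp j.1; positivity)]
  have hprod : (0:ℝ) ≤ ∏ j : {k // k ∈ I}, (p j.1 : ℝ) :=
    Finset.prod_nonneg fun j _ => by positivity
  rw [ENNReal.toReal_ofReal (by positivity)]
  rw [Fintype.card_coe, ← Finset.prod_coe_sort I (fun k => (p k : ℝ))]
  ring

/-- The Newton number of `F₀ = {p₁e₁, …, pₙeₙ}` (the support of the
Brieskorn–Pham singularity `z₁^{p₁} + ⋯ + zₙ^{pₙ}`) equals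
`∏ₖ (pₖ − 1)`. -/
theorem newtonNumber_brieskorn_pham (n : ℕ) (hn : 1 ≤ n) (p : Fin n → ℕ)
    (hp : ∀ k, 2 ≤ p k) :
    newtonNumber (Finset.image (fun k : Fin n => Pi.single k (p k))
      Finset.univ) = ∏ k, ((p k : ℝ) - 1) := by
  classical
  rw [newtonNumber]
  have h1 : ∀ I : Finset (Fin n),
      (-1:ℝ) ^ (n - I.card) * (I.card.factorial : ℝ)
          * newtonVolume (Finset.image (fun k : Fin n => Pi.single k (p k)) Finset.univ) I
      = (-1:ℝ) ^ (n - I.card) * ∏ k ∈ I, (p k : ℝ) := by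
    intro I
    rw [newtonVolume_eq n p hp I]
    have hf : (I.card.factorial : ℝ) ≠ 0 := Nat.cast_ne_zero.mpr I.card.factorial_ne_zero
    field_simp
  simp_rw [h1]
  have h2 : ∏ k, ((p k:ℝ) - 1)
      = ∑ I : Finset (Fin n), (-1:ℝ)^(n - I.card) * ∏ k ∈ I, (p k:ℝ) := by
    simp_rw [sub_eq_add_neg]
    rw [Finset.prod_add, Finset.powerset_univ]
    apply Finset.sum_congr rfl
    intro I _
    rw [Finset.prod_const, Finset.card_univ_diff, Fintype.card_fin]
    ring
  rw [h2]
end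

section
/- Let n ≥ 1, let p₁,…,pₙ ≥ 2 be integers, write p′_k = ∏_{j≠k} p_j, and let i ∈ ℕⁿ be a lattice point with i_k ≥ 1 for every k and i₁/p₁ + … + iₙ/pₙ < 1. Then ν(F₀) − ν(F₀ ∪ {i}) = p₁⋯pₙ − i₁p′₁ − … − iₙp′ₙ, where F₀ = {p₁e₁,…,pₙeₙ}. -/
open MeasureTheory Finset
open scoped ENNReal

namespace NewtonProof

variable {n : ℕ}

/-- linear form `∑ x j / p j` -/
noncomputable def L (p : Fin n → ℕ) (x : Fin n → ℝ) : ℝ := ∑ j, x j / p j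

noncomputable def sig (p i : Fin n → ℕ) : ℝ := ∑ j, (i j : ℝ) / p j

noncomputable def W (p i : Fin n → ℕ) (k : Fin n) (x : Fin n → ℝ) : ℝ :=
  L p x + (1 - sig p i) * (x k / i k)

def F0 (p : Fin n → ℕ) : Finset (Fin n → ℕ) :=
  Finset.image (fun k => Pi.single k (p k)) Finset.univ

noncomputable def NPdef (F : Finset (Fin n → ℕ)) : Set (Fin n → ℝ) :=
  convexHull ℝ (⋃ a ∈ F, {x : Fin n → ℝ | ∀ k, (a k : ℝ) ≤ x k})

lemma L_combo (p : Fin n → ℕ) (a b : ℝ) (x y : Fin n → ℝ) :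
    L p (a • x + b • y) = a * L p x + b * L p y := by
  simp only [L, Pi.add_apply, Pi.smul_apply, smul_eq_mul]
  rw [Finset.mul_sum, Finset.mul_sum, ← Finset.sum_add_distrib]
  exact Finset.sum_congr rfl fun j _ => by ring

lemma W_combo (p i : Fin n → ℕ) (k : Fin n) (a b : ℝ) (x y : Fin n → ℝ) :
    W p i k (a • x + b • y) = a * W p i k x + b * W p i k y := by
  simp only [W, L_combo, Pi.add_apply, Pi.smul_apply, smul_eq_mul]
  ring

lemma convex0 (p : Fin n → ℕ) :
    Convex ℝ {x : Fin n → ℝ | (∀ k, 0 ≤ x k) ∧ 1 ≤ L p x} := by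
  intro x hx y hy a b ha hb hab
  refine ⟨fun k => ?_, ?_⟩
  · have := hx.1 k; have := hy.1 k
    simp only [Pi.add_apply, Pi.smul_apply, smul_eq_mul]
    nlinarith
  · rw [L_combo]
    nlinarith [hx.2, hy.2]

lemma convex1 (p i : Fin n → ℕ) :
    Convex ℝ {x : Fin n → ℝ | (∀ k, 0 ≤ x k) ∧ ∀ k, 1 ≤ W p i k x} := by
  intro x hx y hy a b ha hb hab
  refine ⟨fun k => ?_, fun k => ?_⟩
  · have := hx.1 k; have := hy.1 k
    simp only [Pi.add_apply, Pi.smul_apply, smul_eq_mul]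
    nlinarith
  · rw [W_combo]
    nlinarith [hx.2 k, hy.2 k]

variable {p i : Fin n → ℕ}

lemma pR_pos (hp : ∀ k, 2 ≤ p k) (k : Fin n) : (0:ℝ) < p k := by
  have := hp k
  have : (2:ℝ) ≤ p k := by exact_mod_cast this
  linarith

lemma iR_pos (hi : ∀ k, 1 ≤ i k) (k : Fin n) : (0:ℝ) < i k := by
  have := hi k
  have : (1:ℝ) ≤ i k := by exact_mod_cast this
  linarith

/-- first direction for F0 -/
lemma NP0_subset (hp : ∀ k, 2 ≤ p k) : NPdef (F0 p) ⊆ {x : Fin n → ℝ | (∀ k, 0 ≤ x k) ∧ 1 ≤ L p x} := by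
  apply convexHull_min _ (convex0 p)
  rintro x hx
  simp only [Set.mem_iUnion, Set.mem_setOf_eq] at hx
  obtain ⟨a, ha, hxa⟩ := hx
  simp only [F0, Finset.mem_image, Finset.mem_univ, true_and] at ha
  obtain ⟨k, rfl⟩ := ha
  have hx0 : ∀ j, (0:ℝ) ≤ x j := fun j => le_trans (by positivity) (hxa j)
  refine ⟨hx0, ?_⟩
  have h1 : (p k : ℝ) ≤ x k := by
    have := hxa k
    rwa [Pi.single_eq_same] at this
  have h2 : (1:ℝ) ≤ x k / p k := (one_le_div (pR_pos hp k)).2 h1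
  calc (1:ℝ) ≤ x k / p k := h2
    _ ≤ ∑ j, x j / p j := Finset.single_le_sum (f := fun j => x j / (p j : ℝ))
        (fun j _ => div_nonneg (hx0 j) (pR_pos hp j).le) (Finset.mem_univ k)

lemma mem_genset_single {F : Finset (Fin n → ℕ)} {a : Fin n → ℕ} (ha : a ∈ F)
    {x : Fin n → ℝ} (hx : ∀ k, (a k : ℝ) ≤ x k) :
    x ∈ ⋃ b ∈ F, {y : Fin n → ℝ | ∀ k, (b k : ℝ) ≤ y k} := by
  simp only [Set.mem_iUnion, Set.mem_setOf_eq]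
  exact ⟨a, ha, hx⟩

/-- second direction for F0 -/
lemma NP0_supset (hp : ∀ k, 2 ≤ p k) :
    {x : Fin n → ℝ | (∀ k, 0 ≤ x k) ∧ 1 ≤ L p x} ⊆ NPdef (F0 p) := by
  rintro x ⟨hx0, hxs⟩
  set s : ℝ := L p x with hs
  have hs1 : (1:ℝ) ≤ s := hxs
  have hspos : (0:ℝ) < s := lt_of_lt_of_le one_pos hs1
  set w : Fin n → ℝ := fun k => x k / (p k * s) with hw
  set z : Fin n → (Fin n → ℝ) := fun k => fun j => if j = k then s * p k else 0 with hz
  have hw0 : ∀ k ∈ Finset.univ, 0 ≤ w k := fun k _ => by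
    have := hx0 k; have := pR_pos hp k; positivity
  have hwsum : ∑ k, w k = 1 := by
    have : ∀ k, w k = (x k / p k) / s := fun k => by rw [hw, div_div]
    rw [Finset.sum_congr rfl fun k _ => this k, ← Finset.sum_div]
    exact div_self (ne_of_gt hspos)
  have hzmem : ∀ k ∈ Finset.univ, z k ∈ ⋃ a ∈ F0 p, {y : Fin n → ℝ | ∀ j, (a j : ℝ) ≤ y j} := by
    intro k _
    refine mem_genset_single (F := F0 p) (a := Pi.single k (p k))
      (Finset.mem_image_of_mem _ (Finset.mem_univ k)) fun j => ?_
    rcases eq_or_ne j k with rfl | hjk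
    · simp only [Pi.single_eq_same, hz, if_pos rfl]
      nlinarith [pR_pos hp j]
    · simp [Pi.single_eq_of_ne hjk, hz, if_neg hjk]
  have hcm : Finset.univ.centerMass w z = x := by
    rw [Finset.centerMass_eq_of_sum_1 _ z hwsum]
    funext j
    rw [Finset.sum_apply]
    have : ∀ k, (w k • z k) j = if j = k then w k * (s * p k) else 0 := by
      intro k
      simp only [Pi.smul_apply, smul_eq_mul, hz]
      split_ifs <;> ring
    rw [Finset.sum_congr rfl fun k _ => this k, Finset.sum_ite_eq]
    simp only [Finset.mem_univ, if_true]
    have hpj := pR_pos hp j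
    have h1 : (p j : ℝ) ≠ 0 := ne_of_gt hpj
    have h2 : s ≠ 0 := ne_of_gt hspos
    rw [hw]
    show x j / (↑(p j) * s) * (s * ↑(p j)) = x j
    rw [mul_comm s (p j : ℝ)]
    exact div_mul_cancel₀ _ (by positivity)
  rw [← hcm]
  exact Finset.centerMass_mem_convexHull _ hw0 (by rw [hwsum]; exact one_pos) hzmem

lemma NP0_eq (hp : ∀ k, 2 ≤ p k) :
    NPdef (F0 p) = {x : Fin n → ℝ | (∀ k, 0 ≤ x k) ∧ 1 ≤ L p x} :=
  le_antisymm (NP0_subset hp) (NP0_supset hp)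

lemma NP1_subset (hp : ∀ k, 2 ≤ p k) (hi : ∀ k, 1 ≤ i k) (hs : sig p i < 1) :
    NPdef (insert i (F0 p)) ⊆
      {x : Fin n → ℝ | (∀ k, 0 ≤ x k) ∧ ∀ k, 1 ≤ W p i k x} := by
  apply convexHull_min _ (convex1 p i)
  rintro x hx
  simp only [Set.mem_iUnion, Set.mem_setOf_eq] at hx
  obtain ⟨a, ha, hxa⟩ := hx
  have hx0 : ∀ j, (0:ℝ) ≤ x j := fun j => le_trans (by positivity) (hxa j)
  rcases Finset.mem_insert.1 ha with hai | ha
  · -- a = i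
    have hxa' : ∀ k, (i k : ℝ) ≤ x k := fun k => hai ▸ hxa k
    refine ⟨hx0, fun k => ?_⟩
    have h1 : sig p i ≤ L p x := by
      unfold sig L
      exact Finset.sum_le_sum fun j _ =>
        (div_le_div_iff_of_pos_right (pR_pos hp j)).2 (hxa' j)
    have h2 : (1 - sig p i) * 1 ≤ (1 - sig p i) * (x k / i k) := by
      apply mul_le_mul_of_nonneg_left _ (by linarith)
      exact (one_le_div (iR_pos hi k)).2 (hxa' k)
    unfold W
    linarith
  · -- a = Pi.single m (p m)
    simp only [F0, Finset.mem_image, Finset.mem_univ, true_and] at ha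
    obtain ⟨m, rfl⟩ := ha
    refine ⟨hx0, fun k => ?_⟩
    have hm : (p m : ℝ) ≤ x m := by
      have := hxa m
      rwa [Pi.single_eq_same] at this
    have h1 : (1:ℝ) ≤ x m / p m := (one_le_div (pR_pos hp m)).2 hm
    have h2 : x m / p m ≤ L p x := Finset.single_le_sum (f := fun j => x j / (p j : ℝ))
      (fun j _ => div_nonneg (hx0 j) (pR_pos hp j).le) (Finset.mem_univ m)
    have h3 : 0 ≤ (1 - sig p i) * (x k / i k) :=
      mul_nonneg (by linarith) (div_nonneg (hx0 k) (iR_pos hi k).le)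
    unfold W
    linarith

lemma NP1_supset (hn : 1 ≤ n) (hp : ∀ k, 2 ≤ p k) (hi : ∀ k, 1 ≤ i k)
    (hs : sig p i < 1) :
    {x : Fin n → ℝ | (∀ k, 0 ≤ x k) ∧ ∀ k, 1 ≤ W p i k x} ⊆
      NPdef (insert i (F0 p)) := by
  have hne : (Finset.univ : Finset (Fin n)).Nonempty := ⟨⟨0, hn⟩, Finset.mem_univ _⟩
  rintro x ⟨hx0, hW⟩
  set t : ℝ := Finset.univ.inf' hne (fun k => x k / i k) with hts
  obtain ⟨k₀, -, hk₀⟩ := Finset.exists_mem_eq_inf' hne (fun k => x k / i k)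
  have htle : ∀ j, t ≤ x j / i j := fun j => Finset.inf'_le _ (Finset.mem_univ j)
  have ht0 : 0 ≤ t := by
    rw [hts, hk₀]
    exact div_nonneg (hx0 k₀) (iR_pos hi k₀).le
  rcases le_or_gt 1 t with ht1 | ht1
  · -- x ≥ i, directly in the generating set of a = i
    apply subset_convexHull
    refine mem_genset_single (Finset.mem_insert_self i _) fun j => ?_
    have : (1:ℝ) ≤ x j / i j := le_trans ht1 (htle j)
    exact (one_le_div (iR_pos hi j)).1 this
  · -- t < 1
    set y : Fin n → ℝ := fun j => x j - t * i j with hy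
    have hy0 : ∀ j, 0 ≤ y j := by
      intro j
      have := htle j
      rw [le_div_iff₀ (iR_pos hi j)] at this
      simp only [hy]
      linarith
    set s : ℝ := ∑ j, y j / p j with hss
    have hLx : L p x = s + t * sig p i := by
      unfold L sig
      rw [hss, Finset.mul_sum, ← Finset.sum_add_distrib]
      refine Finset.sum_congr rfl fun j _ => ?_
      simp only [hy]
      ring
    have hxk₀ : x k₀ / i k₀ = t := by rw [hts, hk₀]
    have hsge : 1 - t ≤ s := by
      have h1 := hW k₀
      unfold W at h1
      rw [hLx, hxk₀] at h1
      nlinarith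
    have h1t : (0:ℝ) < 1 - t := by linarith
    have hspos : (0:ℝ) < s := lt_of_lt_of_le h1t hsge
    set m : Fin n → ℝ := (1 - t)⁻¹ • y with hm
    have hmem_m : m ∈ NPdef (insert i (F0 p)) := by
      set w : Fin n → ℝ := fun j => y j / (p j * s) with hw
      set z : Fin n → (Fin n → ℝ) := fun j => fun r => if r = j then s / (1 - t) * p j else 0
        with hz
      have hw0 : ∀ j ∈ Finset.univ, 0 ≤ w j := fun j _ => by
        have := hy0 j; have := pR_pos hp j; positivity
      have hwsum : ∑ j, w j = 1 := by
        have : ∀ j, w j = (y j / p j) / s := fun j => by rw [hw, div_div]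
        rw [Finset.sum_congr rfl fun j _ => this j, ← Finset.sum_div]
        exact div_self (ne_of_gt hspos)
      have hzmem : ∀ j ∈ Finset.univ,
          z j ∈ ⋃ a ∈ insert i (F0 p), {v : Fin n → ℝ | ∀ r, (a r : ℝ) ≤ v r} := by
        intro j _
        refine mem_genset_single (Finset.mem_insert_of_mem
          (Finset.mem_image_of_mem _ (Finset.mem_univ j))) fun r => ?_
        rcases eq_or_ne r j with rfl | hrj
        · simp only [Pi.single_eq_same, hz, if_pos rfl]
          have h1 : (1:ℝ) ≤ s / (1 - t) := (one_le_div h1t).2 hsge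
          nlinarith [pR_pos hp r]
        · simp [Pi.single_eq_of_ne hrj, hz, if_neg hrj]
      have hcm : Finset.univ.centerMass w z = m := by
        rw [Finset.centerMass_eq_of_sum_1 _ z hwsum]
        funext r
        rw [Finset.sum_apply]
        have : ∀ j, (w j • z j) r = if r = j then w j * (s / (1 - t) * p j) else 0 := by
          intro j
          simp only [Pi.smul_apply, smul_eq_mul, hz]
          split_ifs <;> ring
        rw [Finset.sum_congr rfl fun j _ => this j, Finset.sum_ite_eq]
        simp only [Finset.mem_univ, if_true]
        have hpr := pR_pos hp r
        rw [hw, hm]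
        show y r / (↑(p r) * s) * (s / (1 - t) * ↑(p r)) = (1 - t)⁻¹ * y r
        field_simp
      rw [← hcm]
      exact Finset.centerMass_mem_convexHull _ hw0 (by rw [hwsum]; exact one_pos) hzmem
    have hmem_i : (fun j => (i j : ℝ)) ∈ NPdef (insert i (F0 p)) := by
      apply subset_convexHull
      exact mem_genset_single (Finset.mem_insert_self i _) fun j => le_refl _
    have hxeq : x = t • (fun j => (i j : ℝ)) + (1 - t) • m := by
      funext j
      have hinv : (1 - t) * ((1 - t)⁻¹ * (x j - t * i j)) = x j - t * i j := by
        rw [← mul_assoc, mul_inv_cancel₀ h1t.ne', one_mul]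
      simp only [Pi.add_apply, Pi.smul_apply, smul_eq_mul, hm, hy]
      rw [hinv]
      ring
    rw [hxeq]
    exact (convex_convexHull ℝ _) hmem_i hmem_m ht0 h1t.le (by ring)

lemma NP1_eq (hn : 1 ≤ n) (hp : ∀ k, 2 ≤ p k) (hi : ∀ k, 1 ≤ i k) (hs : sig p i < 1) :
    NPdef (insert i (F0 p)) = {x : Fin n → ℝ | (∀ k, 0 ≤ x k) ∧ ∀ k, 1 ≤ W p i k x} :=
  le_antisymm (NP1_subset hp hi hs) (NP1_supset hn hp hi hs)

/-! ### Volume of the standard open simplex -/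

def simplexSet (n : ℕ) : Set (Fin n → ℝ) :=
  {u : Fin n → ℝ | (∀ k, 0 ≤ u k) ∧ ∑ k, u k < 1}

lemma measurableSet_nonneg_and_lt {ι : Type*} [Countable ι]
    (f : ι → (Fin n → ℝ) → ℝ) (hf : ∀ j, Measurable (f j))
    (g : (Fin n → ℝ) → ℝ) (hg : Measurable g) :
    MeasurableSet {x : Fin n → ℝ | (∀ j, 0 ≤ f j x) ∧ g x < 1} := by
  have h1 : {x : Fin n → ℝ | (∀ j, 0 ≤ f j x) ∧ g x < 1}
      = (⋂ j, {x | 0 ≤ f j x}) ∩ {x | g x < 1} := by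
    ext x
    simp [Set.mem_iInter]
  rw [h1]
  exact (MeasurableSet.iInter fun j =>
    measurableSet_le measurable_const (hf j)).inter
    (measurableSet_lt hg measurable_const)

lemma measurableSet_simplexSet : MeasurableSet (simplexSet n) :=
  measurableSet_nonneg_and_lt (fun k x => x k) (fun k => measurable_pi_apply k)
    (fun x => ∑ k, x k)
    (Finset.measurable_sum _ fun k _ => measurable_pi_apply k)

lemma det_toLin' (M : Matrix (Fin n) (Fin n) ℝ) :
    LinearMap.det (Matrix.toLin' M) = M.det := by
  rw [← LinearMap.det_toMatrix', LinearMap.toMatrix'_toLin']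

noncomputable def sgnMap (ε : Fin n → Bool) : (Fin n → ℝ) →ₗ[ℝ] (Fin n → ℝ) :=
  Matrix.toLin' (Matrix.diagonal fun k => if ε k then (1:ℝ) else -1)

lemma sgnMap_apply (ε : Fin n → Bool) (x : Fin n → ℝ) (k : Fin n) :
    sgnMap ε x k = (if ε k then (1:ℝ) else -1) * x k := by
  simp [sgnMap, Matrix.toLin'_apply, Matrix.mulVec_diagonal]

lemma ker_proj_null (k : Fin n) : volume {x : Fin n → ℝ | x k = 0} = 0 := by
  have h1 : {x : Fin n → ℝ | x k = 0} =
      (LinearMap.ker (LinearMap.proj (R := ℝ) (φ := fun _ : Fin n => ℝ) k) :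
        Submodule ℝ (Fin n → ℝ)) := by
    ext x
    simp [LinearMap.mem_ker]
  rw [h1]
  apply Measure.addHaar_submodule
  intro h
  have : Pi.single k (1:ℝ) ∈ LinearMap.ker (LinearMap.proj (R := ℝ)
      (φ := fun _ : Fin n => ℝ) k) := h ▸ Submodule.mem_top
  simp [LinearMap.mem_ker] at this

lemma volume_simplexSet : volume (simplexSet n) = ENNReal.ofReal (1 / n.factorial) := by
  classical
  set T : (Fin n → Bool) → Set (Fin n → ℝ) := fun ε =>
    {x | (∀ k, 0 ≤ (if ε k then (1:ℝ) else -1) * x k) ∧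
      ∑ k, (if ε k then (1:ℝ) else -1) * x k < 1} with hT
  have hTmeas : ∀ ε, MeasurableSet (T ε) := fun ε =>
    measurableSet_nonneg_and_lt (fun k x => (if ε k then (1:ℝ) else -1) * x k)
      (fun k => (measurable_pi_apply k).const_mul _)
      (fun x => ∑ k, (if ε k then (1:ℝ) else -1) * x k)
      (Finset.measurable_sum _ fun k _ => (measurable_pi_apply k).const_mul _)
  have himg : ∀ ε, T ε = sgnMap ε '' simplexSet n := by
    intro ε
    have hsq : ∀ (k : Fin n) (c : ℝ),
        (if ε k then (1:ℝ) else -1) * ((if ε k then (1:ℝ) else -1) * c) = c := by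
      intro k c; split_ifs <;> ring
    ext x
    constructor
    · rintro ⟨h0, h1⟩
      refine ⟨sgnMap ε x, ⟨?_, ?_⟩, ?_⟩
      · intro k; rw [sgnMap_apply]; exact h0 k
      · rw [Finset.sum_congr rfl fun k _ => sgnMap_apply ε x k]; exact h1
      · funext k
        rw [sgnMap_apply, sgnMap_apply]
        exact hsq k (x k)
    · rintro ⟨u, ⟨h0, h1⟩, rfl⟩
      constructor
      · intro k; rw [sgnMap_apply, hsq k (u k)]; exact h0 k
      · calc ∑ k, (if ε k then (1:ℝ) else -1) * sgnMap ε u k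
            = ∑ k, u k := Finset.sum_congr rfl fun k _ => by
              rw [sgnMap_apply]; exact hsq k (u k)
          _ < 1 := h1
  have hvolT : ∀ ε, volume (T ε) = volume (simplexSet n) := by
    intro ε
    rw [himg ε, Measure.addHaar_image_linearMap]
    have hdet : LinearMap.det (sgnMap ε) = ∏ k, (if ε k then (1:ℝ) else -1) := by
      rw [sgnMap, det_toLin', Matrix.det_diagonal]
    rw [hdet]
    have habs : |∏ k, (if ε k then (1:ℝ) else -1)| = 1 := by
      have h1 : ∀ k ∈ Finset.univ, |if ε k then (1:ℝ) else -1| = 1 := fun k _ => by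
        split_ifs <;> simp
      rw [Finset.abs_prod, Finset.prod_congr rfl h1, Finset.prod_const_one]
    rw [habs, ENNReal.ofReal_one, one_mul]
  have hunion : {x : Fin n → ℝ | ∑ k, |x k| < 1} = ⋃ ε, T ε := by
    ext x
    simp only [Set.mem_iUnion, Set.mem_setOf_eq, hT]
    constructor
    · intro hx
      refine ⟨fun k => decide (0 ≤ x k), fun k => ?_, ?_⟩
      · by_cases h : 0 ≤ x k
        · simp [h]
        · have hd : decide (0 ≤ x k) = false := by simp [h]
          simp only [hd, Bool.false_eq_true, if_false, neg_mul, one_mul]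
          linarith [lt_of_not_ge h]
      · have : ∀ k, (if decide (0 ≤ x k) then (1:ℝ) else -1) * x k = |x k| := by
          intro k
          by_cases h : 0 ≤ x k
          · simp [h, abs_of_nonneg h]
          · have hd : decide (0 ≤ x k) = false := by simp [h]
            simp only [hd, Bool.false_eq_true, if_false, neg_mul, one_mul]
            rw [abs_of_neg (lt_of_not_ge h)]
        rw [Finset.sum_congr rfl fun k _ => this k]; exact hx
    · rintro ⟨ε, h0, h1⟩
      have : ∀ k, |x k| = (if ε k then (1:ℝ) else -1) * x k := by
        intro k
        have hk := h0 k
        by_cases hε : ε k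
        · simp only [hε, if_true, one_mul] at hk ⊢
          exact abs_of_nonneg hk
        · simp only [hε, Bool.false_eq_true, if_false, neg_mul, one_mul] at hk ⊢
          rw [abs_of_nonpos (by linarith)]
      rw [Finset.sum_congr rfl fun k _ => this k]; exact h1
  have hdisj : Pairwise (Function.onFun (AEDisjoint volume) T) := by
    intro ε ε' hne
    obtain ⟨k, hk⟩ : ∃ k, ε k ≠ ε' k := Function.ne_iff.1 hne
    refine measure_mono_null (fun x hx => ?_) (ker_proj_null k)
    obtain ⟨hx1, hx2⟩ := hx
    have h1 := hx1.1 k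
    have h2 := hx2.1 k
    by_cases h : ε k
    · have h' : ε' k = false := by
        cases hε' : ε' k
        · rfl
        · exact absurd (by rw [h, hε']) hk
      simp only [h, h', Bool.false_eq_true, if_true, if_false, one_mul, neg_mul] at h1 h2
      simp only [Set.mem_setOf_eq]
      linarith
    · have hf : ε k = false := by simpa using h
      have h' : ε' k = true := by
        cases hε' : ε' k
        · exact absurd (by rw [hf, hε']) hk
        · rfl
      simp only [hf, h', Bool.false_eq_true, if_true, if_false, one_mul, neg_mul] at h1 h2
      simp only [Set.mem_setOf_eq]
      linarith
  have hL1 := MeasureTheory.volume_sum_rpow_lt_one (Fin n) (le_refl (1:ℝ))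
  simp only [Real.rpow_one, Fintype.card_fin] at hL1
  have hgam : (2 * Real.Gamma (1 / 1 + 1)) ^ n / Real.Gamma ((n:ℝ) / 1 + 1)
      = 2 ^ n / n.factorial := by
    have hg2 : Real.Gamma (1 / 1 + 1) = 1 := by norm_num [Real.Gamma_two]
    have hgn : Real.Gamma ((n:ℝ) / 1 + 1) = n.factorial := by
      rw [div_one]
      exact Real.Gamma_nat_eq_factorial n
    rw [hg2, hgn]
    norm_num
  rw [hgam] at hL1
  have hsum : volume {x : Fin n → ℝ | ∑ k, |x k| < 1}
      = (2 ^ n : ℝ≥0∞) * volume (simplexSet n) := by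
    rw [hunion, measure_iUnion₀ hdisj fun ε => (hTmeas ε).nullMeasurableSet]
    rw [tsum_fintype]
    rw [Finset.sum_congr rfl fun ε _ => hvolT ε, Finset.sum_const, Finset.card_univ]
    rw [Fintype.card_fun]
    simp only [Fintype.card_bool, Fintype.card_fin, nsmul_eq_mul, Nat.cast_pow,
      Nat.cast_ofNat]
  rw [hL1] at hsum
  have h2n : ((2:ℝ≥0∞) ^ n) ≠ 0 := pow_ne_zero _ (by norm_num)
  have h2n' : ((2:ℝ≥0∞) ^ n) ≠ ⊤ := ENNReal.pow_ne_top (by norm_num)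
  have : ENNReal.ofReal ((2:ℝ) ^ n / n.factorial)
      = (2 ^ n : ℝ≥0∞) * ENNReal.ofReal (1 / n.factorial) := by
    rw [div_eq_mul_one_div]
    rw [ENNReal.ofReal_mul (by positivity)]
    congr 1
    rw [ENNReal.ofReal_pow (by norm_num)]
    norm_num
  rw [this] at hsum
  exact (ENNReal.mul_right_inj h2n h2n').1 hsum.symm

/-! ### The regions under the two Newton diagrams -/

lemma measurable_L (p : Fin n → ℕ) : Measurable (L p) :=
  Finset.measurable_sum _ fun j _ => (measurable_pi_apply j).div_const _

lemma measurable_W (p i : Fin n → ℕ) (k : Fin n) : Measurable (W p i k) :=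
  (measurable_L p).add (((measurable_pi_apply k).div_const _).const_mul _)

noncomputable def diagMap (p : Fin n → ℕ) : (Fin n → ℝ) →ₗ[ℝ] (Fin n → ℝ) :=
  Matrix.toLin' (Matrix.diagonal fun j => (p j : ℝ))

lemma diagMap_apply (p : Fin n → ℕ) (x : Fin n → ℝ) (k : Fin n) :
    diagMap p x k = (p k : ℝ) * x k := by
  simp [diagMap, Matrix.toLin'_apply, Matrix.mulVec_diagonal]

lemma det_diagMap (p : Fin n → ℕ) :
    LinearMap.det (diagMap p) = ∏ k, (p k : ℝ) := by
  rw [diagMap, det_toLin', Matrix.det_diagonal]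

noncomputable def Bmat (p i : Fin n → ℕ) (k : Fin n) : Matrix (Fin n) (Fin n) ℝ :=
  (Matrix.diagonal fun j => (p j : ℝ)).updateCol k (fun j => (i j : ℝ))

noncomputable def Bmap (p i : Fin n → ℕ) (k : Fin n) : (Fin n → ℝ) →ₗ[ℝ] (Fin n → ℝ) :=
  Matrix.toLin' (Bmat p i k)

lemma Bmap_apply (p i : Fin n → ℕ) (k : Fin n) (x : Fin n → ℝ) (r : Fin n) :
    Bmap p i k x r = (i r : ℝ) * x k + (if r = k then 0 else (p r : ℝ) * x r) := by
  classical
  have h1 : Bmap p i k x r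
      = ∑ c, (if c = k then (i r : ℝ) else if r = c then (p r : ℝ) else 0) * x c := by
    simp only [Bmap, Matrix.toLin'_apply, Matrix.mulVec, dotProduct, Bmat,
      Matrix.updateCol_apply, Matrix.diagonal_apply]
  rw [h1]
  have h2 : ∀ c, (if c = k then (i r : ℝ) else if r = c then (p r : ℝ) else 0) * x c
      = (if c = k then (i r : ℝ) * x c else 0)
        + (if c = r then (if r = k then 0 else (p r : ℝ) * x c) else 0) := by
    intro c
    rcases eq_or_ne c k with rfl | h1'
    · rcases eq_or_ne c r with rfl | h2'
      · simp
      · simp [if_neg (Ne.symm h2'), h2']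
    · rcases eq_or_ne c r with rfl | h2'
      · simp [h1', Ne.symm h1']
      · simp [h1', h2', if_neg (Ne.symm h2')]
  rw [Finset.sum_congr rfl fun c _ => h2 c, Finset.sum_add_distrib,
    Finset.sum_ite_eq' Finset.univ k (fun c => (i r : ℝ) * x c),
    Finset.sum_ite_eq' Finset.univ r (fun c => if r = k then 0 else (p r : ℝ) * x c)]
  simp only [Finset.mem_univ, if_true]

lemma det_Bmat {p i : Fin n → ℕ} (hp : ∀ k, 2 ≤ p k) (k : Fin n) :
    (Bmat p i k).det = (i k : ℝ) * ∏ j ∈ Finset.univ.erase k, (p j : ℝ) := by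
  have hc := Matrix.mulVec_cramer (Matrix.diagonal fun j => (p j : ℝ))
    (fun j => (i j : ℝ))
  have hk := congrFun hc k
  rw [Matrix.mulVec_diagonal] at hk
  rw [Matrix.cramer_apply] at hk
  have hdet : ((Matrix.diagonal fun j => (p j : ℝ))).det = ∏ j, (p j : ℝ) :=
    Matrix.det_diagonal
  have hBm : (Matrix.diagonal fun j => (p j : ℝ)).updateCol k (fun j => (i j : ℝ))
      = Bmat p i k := rfl
  rw [hBm, hdet] at hk
  simp only [Pi.smul_apply, smul_eq_mul] at hk
  have hprod : ∏ j, (p j : ℝ) = (p k : ℝ) * ∏ j ∈ Finset.univ.erase k, (p j : ℝ) :=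
    (Finset.mul_prod_erase Finset.univ _ (Finset.mem_univ k)).symm
  have hpk := pR_pos hp k
  apply mul_left_cancel₀ (ne_of_gt hpk)
  rw [hk, hprod]
  ring

lemma det_Bmap {p i : Fin n → ℕ} (hp : ∀ k, 2 ≤ p k) (k : Fin n) :
    LinearMap.det (Bmap p i k) = (i k : ℝ) * ∏ j ∈ Finset.univ.erase k, (p j : ℝ) := by
  rw [Bmap, det_toLin', det_Bmat hp k]

def C0set (p : Fin n → ℕ) : Set (Fin n → ℝ) :=
  {x | (∀ k, 0 ≤ x k) ∧ L p x < 1}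

noncomputable def Eset (p i : Fin n → ℕ) (k : Fin n) : Set (Fin n → ℝ) :=
  {x | 0 ≤ x k ∧ (∀ j, (i j : ℝ) * x k ≤ (i k : ℝ) * x j) ∧ W p i k x < 1}

lemma measurableSet_C0set (p : Fin n → ℕ) : MeasurableSet (C0set p) :=
  measurableSet_nonneg_and_lt (fun k x => x k) (fun k => measurable_pi_apply k)
    (L p) (measurable_L p)

lemma measurableSet_Eset (p i : Fin n → ℕ) (k : Fin n) :
    MeasurableSet (Eset p i k) := by
  have h1 : Eset p i k = {x : Fin n → ℝ | 0 ≤ x k} ∩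
      ((⋂ j, {x : Fin n → ℝ | (i j : ℝ) * x k ≤ (i k : ℝ) * x j}) ∩
        {x : Fin n → ℝ | W p i k x < 1}) := by
    ext x
    simp [Eset, Set.mem_iInter, and_assoc]
  rw [h1]
  refine (measurableSet_le measurable_const (measurable_pi_apply k)).inter
    ((MeasurableSet.iInter fun j => measurableSet_le
      ((measurable_pi_apply k).const_mul _) ((measurable_pi_apply j).const_mul _)).inter
      (measurableSet_lt (measurable_W p i k) measurable_const))

lemma C0_img {p : Fin n → ℕ} (hp : ∀ k, 2 ≤ p k) :
    C0set p = diagMap p '' simplexSet n := by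
  ext x
  constructor
  · rintro ⟨hx0, hxL⟩
    refine ⟨fun k => x k / p k, ⟨fun k => div_nonneg (hx0 k) (pR_pos hp k).le, hxL⟩, ?_⟩
    funext k
    rw [diagMap_apply, mul_comm, div_mul_cancel₀ _ (ne_of_gt (pR_pos hp k))]
  · rintro ⟨u, ⟨hu0, hus⟩, rfl⟩
    constructor
    · intro k
      rw [diagMap_apply]
      exact mul_nonneg (pR_pos hp k).le (hu0 k)
    · have : L p (diagMap p u) = ∑ k, u k := by
        unfold L
        refine Finset.sum_congr rfl fun k _ => ?_
        rw [diagMap_apply, mul_comm, mul_div_assoc, div_self (ne_of_gt (pR_pos hp k)),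
          mul_one]
      rw [this]
      exact hus

lemma W_Bmap {p i : Fin n → ℕ} (hp : ∀ k, 2 ≤ p k) (hi : ∀ k, 1 ≤ i k)
    (k : Fin n) (u : Fin n → ℝ) :
    W p i k (Bmap p i k u) = ∑ r, u r := by
  have hik := iR_pos hi k
  have hL : L p (Bmap p i k u) = u k * sig p i + (∑ r, u r) - u k := by
    unfold L sig
    have h1 : ∀ r, Bmap p i k u r / p r
        = u k * ((i r : ℝ) / p r) + (if r = k then 0 else u r) := by
      intro r
      rw [Bmap_apply]
      have hpr := pR_pos hp r
      split_ifs with h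
      · field_simp
        ring
      · field_simp
    rw [Finset.sum_congr rfl fun r _ => h1 r, Finset.sum_add_distrib, ← Finset.mul_sum]
    have h2 : ∑ r, (if r = k then (0:ℝ) else u r) = (∑ r, u r) - u k := by
      have h3 := Finset.sum_erase_add Finset.univ
        (fun r => if r = k then (0:ℝ) else u r) (Finset.mem_univ k)
      have h4 := Finset.sum_erase_add Finset.univ u (Finset.mem_univ k)
      have h5 : ∑ r ∈ Finset.univ.erase k, (if r = k then (0:ℝ) else u r)
          = ∑ r ∈ Finset.univ.erase k, u r :=
        Finset.sum_congr rfl fun r hr => if_neg (Finset.mem_erase.1 hr).1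
      have h6 : (fun r => if r = k then (0:ℝ) else u r) k = 0 := by simp
      rw [← h3, h5, if_pos (rfl : k = k), add_zero, eq_sub_iff_add_eq]
      exact h4
    rw [h2]
    ring
  unfold W
  rw [hL]
  have hxk : Bmap p i k u k = (i k : ℝ) * u k := by
    rw [Bmap_apply, if_pos rfl, add_zero]
  rw [hxk]
  have : (i k : ℝ) * u k / (i k : ℝ) = u k := by field_simp
  rw [this]
  ring

lemma E_img {p i : Fin n → ℕ} (hp : ∀ k, 2 ≤ p k) (hi : ∀ k, 1 ≤ i k) (k : Fin n) :
    Eset p i k = Bmap p i k '' simplexSet n := by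
  have hik := iR_pos hi k
  ext x
  constructor
  · rintro ⟨hxk, hmin, hW⟩
    set u : Fin n → ℝ := fun r =>
      if r = k then x k / i k else (x r - (i r : ℝ) * (x k / i k)) / p r with hu
    have huk : u k = x k / i k := by simp [hu]
    have hur : ∀ r, r ≠ k → u r = (x r - (i r : ℝ) * (x k / i k)) / p r := by
      intro r hr
      simp [hu, hr]
    have hBu : Bmap p i k u = x := by
      funext r
      rw [Bmap_apply]
      rcases eq_or_ne r k with rfl | h
      · rw [if_pos rfl, add_zero, huk, mul_comm, div_mul_cancel₀ _ (ne_of_gt hik)]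
      · rw [if_neg h, huk, hur r h]
        have hpr := ne_of_gt (pR_pos hp r)
        field_simp
        ring
    refine ⟨u, ⟨?_, ?_⟩, hBu⟩
    · intro r
      rcases eq_or_ne r k with rfl | h
      · rw [huk]
        exact div_nonneg hxk hik.le
      · rw [hur r h]
        apply div_nonneg _ (pR_pos hp r).le
        rw [sub_nonneg, ← mul_div_assoc, div_le_iff₀ hik]
        nlinarith [hmin r]
    · have := W_Bmap hp hi k u
      rw [hBu] at this
      rw [← this]
      exact hW
  · rintro ⟨u, ⟨hu0, hus⟩, rfl⟩
    have hxr : ∀ r, Bmap p i k u r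
        = (i r : ℝ) * u k + (if r = k then 0 else (p r : ℝ) * u r) :=
      Bmap_apply p i k u
    refine ⟨?_, ?_, ?_⟩
    · rw [hxr k, if_pos rfl, add_zero]
      exact mul_nonneg (iR_pos hi k).le (hu0 k)
    · intro j
      rw [hxr k, hxr j, if_pos rfl, add_zero]
      have hij := iR_pos hi j
      split_ifs with h
      · subst h
        exact le_of_eq (by ring)
      · have h1 : (i j : ℝ) * ((i k : ℝ) * u k) = (i k : ℝ) * ((i j : ℝ) * u k) := by ring
        rw [h1]
        apply mul_le_mul_of_nonneg_left _ (iR_pos hi k).le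
        nlinarith [mul_nonneg (pR_pos hp j).le (hu0 j)]
    · rw [W_Bmap hp hi k u]
      exact hus

lemma pair_null (k l : Fin n) (hkl : k ≠ l) (a b : ℝ) (ha : a ≠ 0) :
    volume {x : Fin n → ℝ | a * x k = b * x l} = 0 := by
  set f : (Fin n → ℝ) →ₗ[ℝ] ℝ :=
    a • LinearMap.proj k - b • LinearMap.proj l with hf
  have h1 : {x : Fin n → ℝ | a * x k = b * x l} = (LinearMap.ker f : Set (Fin n → ℝ)) := by
    ext x
    simp only [Set.mem_setOf_eq, SetLike.mem_coe, LinearMap.mem_ker, hf,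
      LinearMap.sub_apply, LinearMap.smul_apply, LinearMap.proj_apply, smul_eq_mul,
      sub_eq_zero]
  rw [h1]
  apply Measure.addHaar_submodule
  intro htop
  have hmem : Pi.single k (1:ℝ) ∈ LinearMap.ker f := htop ▸ Submodule.mem_top
  rw [LinearMap.mem_ker, hf] at hmem
  simp only [LinearMap.sub_apply, LinearMap.smul_apply, LinearMap.proj_apply,
    smul_eq_mul, Pi.single_eq_same, Pi.single_eq_of_ne hkl.symm, mul_one, mul_zero,
    sub_zero] at hmem
  exact ha hmem

lemma E_disjoint {p i : Fin n → ℕ} (hi : ∀ k, 1 ≤ i k) :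
    Pairwise (Function.onFun (AEDisjoint volume) (Eset p i)) := by
  intro k l hkl
  refine measure_mono_null (fun x hx => ?_)
    (pair_null k l hkl ((i l : ℝ)) ((i k : ℝ)) (ne_of_gt (iR_pos hi l)))
  obtain ⟨⟨h1, h2, -⟩, ⟨h3, h4, -⟩⟩ := hx
  exact le_antisymm (h2 l) (h4 k)

lemma C1_eq_union {p i : Fin n → ℕ} (hn : 1 ≤ n) (hp : ∀ k, 2 ≤ p k)
    (hi : ∀ k, 1 ≤ i k) (hs : sig p i < 1) :
    {x : Fin n → ℝ | (∀ k, 0 ≤ x k) ∧ ∃ m, W p i m x < 1} = ⋃ k, Eset p i k := by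
  have hne : (Finset.univ : Finset (Fin n)).Nonempty := ⟨⟨0, hn⟩, Finset.mem_univ _⟩
  ext x
  simp only [Set.mem_setOf_eq, Set.mem_iUnion]
  constructor
  · rintro ⟨hx0, m, hm⟩
    obtain ⟨k₀, -, hk₀⟩ := Finset.exists_mem_eq_inf' hne (fun j => x j / i j)
    have htle : ∀ j, x k₀ / i k₀ ≤ x j / i j := fun j => by
      rw [← hk₀]
      exact Finset.inf'_le _ (Finset.mem_univ j)
    refine ⟨k₀, hx0 k₀, fun j => ?_, ?_⟩
    · have := htle j
      rw [div_le_div_iff₀ (iR_pos hi k₀) (iR_pos hi j)] at this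
      linarith
    · have h1 : (1 - sig p i) * (x k₀ / i k₀) ≤ (1 - sig p i) * (x m / i m) :=
        mul_le_mul_of_nonneg_left (htle m) (by linarith)
      unfold W at hm ⊢
      linarith
  · rintro ⟨k, hxk, hmin, hW⟩
    have hx0 : ∀ j, 0 ≤ x j := by
      intro j
      by_contra hneg
      push_neg at hneg
      have h1 : (0:ℝ) ≤ (i j : ℝ) * x k := mul_nonneg (Nat.cast_nonneg _) hxk
      have h2 : (i k : ℝ) * x j < 0 := mul_neg_of_pos_of_neg (iR_pos hi k) hneg
      linarith [hmin j]
    exact ⟨hx0, k, hW⟩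

lemma prod_pR_nonneg (p : Fin n → ℕ) : (0:ℝ) ≤ ∏ k, (p k : ℝ) :=
  Finset.prod_nonneg fun k _ => Nat.cast_nonneg _

lemma vol_C0 {p : Fin n → ℕ} (hp : ∀ k, 2 ≤ p k) :
    volume (C0set p) = ENNReal.ofReal ((∏ k, (p k : ℝ)) * (1 / n.factorial)) := by
  rw [C0_img hp, Measure.addHaar_image_linearMap, det_diagMap, volume_simplexSet,
    abs_of_nonneg (prod_pR_nonneg p), ← ENNReal.ofReal_mul (prod_pR_nonneg p)]

lemma vol_E {p i : Fin n → ℕ} (hp : ∀ k, 2 ≤ p k) (hi : ∀ k, 1 ≤ i k) (k : Fin n) :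
    volume (Eset p i k) =
      ENNReal.ofReal ((i k : ℝ) * (∏ j ∈ Finset.univ.erase k, (p j : ℝ))
        * (1 / n.factorial)) := by
  have hnn : (0:ℝ) ≤ (i k : ℝ) * ∏ j ∈ Finset.univ.erase k, (p j : ℝ) :=
    mul_nonneg (Nat.cast_nonneg _) (Finset.prod_nonneg fun j _ => Nat.cast_nonneg _)
  rw [E_img hp hi k, Measure.addHaar_image_linearMap, det_Bmap hp k, volume_simplexSet,
    abs_of_nonneg hnn, ← ENNReal.ofReal_mul hnn]

lemma vol_C1 {p i : Fin n → ℕ} (hn : 1 ≤ n) (hp : ∀ k, 2 ≤ p k)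
    (hi : ∀ k, 1 ≤ i k) (hs : sig p i < 1) :
    volume {x : Fin n → ℝ | (∀ k, 0 ≤ x k) ∧ ∃ m, W p i m x < 1} =
      ENNReal.ofReal ((∑ k, (i k : ℝ) * ∏ j ∈ Finset.univ.erase k, (p j : ℝ))
        * (1 / n.factorial)) := by
  rw [C1_eq_union hn hp hi hs,
    measure_iUnion₀ (E_disjoint hi) (fun k => (measurableSet_Eset p i k).nullMeasurableSet),
    tsum_fintype, Finset.sum_congr rfl fun k _ => vol_E hp hi k]
  rw [← ENNReal.ofReal_sum_of_nonneg (fun k _ =>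
    mul_nonneg (mul_nonneg (Nat.cast_nonneg _)
      (Finset.prod_nonneg fun j _ => Nat.cast_nonneg _)) (by positivity))]
  rw [← Finset.sum_mul]

lemma NPdef_eq (F : Finset (Fin n → ℕ)) : newtonPolyhedron F = NPdef F := rfl

lemma filter_univ (F : Finset (Fin n → ℕ)) :
    F.filter (fun a => ∀ k, k ∉ (Finset.univ : Finset (Fin n)) → a k = 0) = F :=
  Finset.filter_true_of_mem fun a _ => fun k hk => absurd (Finset.mem_univ k) hk

lemma newtonVolume_univ (F : Finset (Fin n → ℕ)) (S : Set (Fin n → ℝ))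
    (hS : MeasurableSet S)
    (hSeq : S = {x : Fin n → ℝ | (∀ k, 0 ≤ x k) ∧ x ∉ newtonPolyhedron F}) :
    newtonVolume F Finset.univ = (volume S).toReal := by
  classical
  set e : {k // k ∈ (Finset.univ : Finset (Fin n))} ≃ Fin n :=
    Equiv.subtypeUnivEquiv (fun k => Finset.mem_univ k) with he
  set g := MeasurableEquiv.piCongrLeft (fun _ : Fin n => ℝ) e with hgdef
  have hg : ∀ (x' : {k // k ∈ (Finset.univ : Finset (Fin n))} → ℝ) (k : Fin n),
      g x' k = x' ⟨k, Finset.mem_univ k⟩ := by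
    intro x' k
    rw [hgdef, MeasurableEquiv.coe_piCongrLeft]
    exact Equiv.piCongrLeft_apply_apply (fun _ : Fin n => ℝ) e x' ⟨k, Finset.mem_univ k⟩
  have hset : {x : {k // k ∈ (Finset.univ : Finset (Fin n))} → ℝ |
      (∀ j, 0 ≤ x j) ∧
      (fun k => if h : k ∈ (Finset.univ : Finset (Fin n)) then x ⟨k, h⟩ else 0) ∉
        newtonPolyhedron (F.filter fun a => ∀ k, k ∉ (Finset.univ : Finset (Fin n)) →
          a k = 0)} = ⇑g ⁻¹' S := by
    ext x'
    have hfun : (fun k => if h : k ∈ (Finset.univ : Finset (Fin n)) then x' ⟨k, h⟩ else 0)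
        = g x' := by
      funext k
      rw [dif_pos (Finset.mem_univ k), hg]
    simp only [Set.mem_setOf_eq, Set.mem_preimage, hSeq, hfun, filter_univ]
    constructor
    · rintro ⟨h1, h2⟩
      exact ⟨fun k => (hg x' k).symm ▸ h1 ⟨k, Finset.mem_univ k⟩, h2⟩
    · rintro ⟨h1, h2⟩
      refine ⟨fun j => ?_, h2⟩
      obtain ⟨j, hj⟩ := j
      have := h1 j
      rwa [hg] at this
  unfold newtonVolume
  rw [hset, (volume_measurePreserving_piCongrLeft (fun _ : Fin n => ℝ) e).measure_preimage
    hS.nullMeasurableSet]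

lemma V0_univ {p : Fin n → ℕ} (hp : ∀ k, 2 ≤ p k) :
    newtonVolume (F0 p) Finset.univ = (∏ k, (p k : ℝ)) * (1 / n.factorial) := by
  have hSeq : C0set p = {x : Fin n → ℝ | (∀ k, 0 ≤ x k) ∧ x ∉ newtonPolyhedron (F0 p)} := by
    rw [NPdef_eq, NP0_eq hp]
    ext x
    simp only [C0set, Set.mem_setOf_eq, not_and, not_le]
    constructor
    · rintro ⟨h1, h2⟩
      exact ⟨h1, fun _ => h2⟩
    · rintro ⟨h1, h2⟩
      exact ⟨h1, h2 h1⟩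
  rw [newtonVolume_univ (F0 p) (C0set p) (measurableSet_C0set p) hSeq, vol_C0 hp,
    ENNReal.toReal_ofReal (by positivity)]

lemma V1_univ {p i : Fin n → ℕ} (hn : 1 ≤ n) (hp : ∀ k, 2 ≤ p k)
    (hi : ∀ k, 1 ≤ i k) (hs : sig p i < 1) :
    newtonVolume (insert i (F0 p)) Finset.univ =
      (∑ k, (i k : ℝ) * ∏ j ∈ Finset.univ.erase k, (p j : ℝ)) * (1 / n.factorial) := by
  have hSeq : {x : Fin n → ℝ | (∀ k, 0 ≤ x k) ∧ ∃ m, W p i m x < 1}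
      = {x : Fin n → ℝ | (∀ k, 0 ≤ x k) ∧ x ∉ newtonPolyhedron (insert i (F0 p))} := by
    rw [NPdef_eq, NP1_eq hn hp hi hs]
    ext x
    simp only [Set.mem_setOf_eq, not_and, not_forall, not_le]
    constructor
    · rintro ⟨h1, m, h2⟩
      exact ⟨h1, fun _ => ⟨m, h2⟩⟩
    · rintro ⟨h1, h2⟩
      exact ⟨h1, h2 h1⟩
  have hmeas : MeasurableSet {x : Fin n → ℝ | (∀ k, 0 ≤ x k) ∧ ∃ m, W p i m x < 1} := by
    rw [C1_eq_union hn hp hi hs]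
    exact MeasurableSet.iUnion fun k => measurableSet_Eset p i k
  rw [newtonVolume_univ (insert i (F0 p)) _ hmeas hSeq, vol_C1 hn hp hi hs,
    ENNReal.toReal_ofReal]
  apply mul_nonneg _ (by positivity)
  exact Finset.sum_nonneg fun k _ => mul_nonneg (Nat.cast_nonneg _)
    (Finset.prod_nonneg fun j _ => Nat.cast_nonneg _)

lemma newtonVolume_insert_ne {p i : Fin n → ℕ} (hi : ∀ k, 1 ≤ i k)
    (I : Finset (Fin n)) (hI : I ≠ Finset.univ) :
    newtonVolume (insert i (F0 p)) I = newtonVolume (F0 p) I := by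
  classical
  obtain ⟨k₀, hk₀⟩ : ∃ k, k ∉ I := by
    by_contra h
    push_neg at h
    exact hI (Finset.eq_univ_iff_forall.2 h)
  have hPi : ¬(∀ k, k ∉ I → i k = 0) := by
    intro h
    have := h k₀ hk₀
    have := hi k₀
    omega
  unfold newtonVolume
  rw [Finset.filter_insert, if_neg hPi]

end NewtonProof

/-- If the lattice point `i` strictly under the Newton diagram of
`F₀ = {p₁e₁, …, pₙeₙ}` has all coordinates `≥ 1`, then the drop of the Newton
number caused by adjoining `i` equals
`p₁⋯pₙ − i₁p′₁ − ⋯ − iₙp′ₙ`, where `p′ₖ = ∏_{j ≠ k} pⱼ`. -/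
theorem newtonNumber_drop_interior (n : ℕ) (hn : 1 ≤ n) (p : Fin n → ℕ)
    (hp : ∀ k, 2 ≤ p k) (i : Fin n → ℕ) (hi : ∀ k, 1 ≤ i k)
    (hsum : ∑ k, (i k : ℝ) / (p k : ℝ) < 1) :
    newtonNumber (Finset.image (fun k : Fin n => Pi.single k (p k))
        Finset.univ) -
      newtonNumber (insert i (Finset.image (fun k : Fin n => Pi.single k (p k))
        Finset.univ)) =
    (∏ k, (p k : ℝ)) -
      ∑ k, (i k : ℝ) * ∏ j ∈ Finset.univ.erase k, (p j : ℝ) := by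
  classical
  have hs : NewtonProof.sig p i < 1 := hsum
  have hF0 : Finset.image (fun k : Fin n => Pi.single k (p k)) Finset.univ
      = NewtonProof.F0 p := rfl
  rw [hF0]
  unfold newtonNumber
  rw [← Finset.sum_sub_distrib]
  rw [Finset.sum_eq_single Finset.univ
    (fun I _ hI => by rw [NewtonProof.newtonVolume_insert_ne hi I hI]; ring)
    (fun h => absurd (Finset.mem_univ _) h)]
  rw [Finset.card_univ, Fintype.card_fin, Nat.sub_self, pow_zero, one_mul,
    NewtonProof.V0_univ hp, NewtonProof.V1_univ hn hp hi hs]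
  have hfac : (n.factorial : ℝ) ≠ 0 := Nat.cast_ne_zero.2 n.factorial_ne_zero
  field_simp
end

section
/- Let p₁, p₂ ≥ 2 be integers and let d = gcd(p₁,p₂). If d < min(p₁,p₂), then d is the minimum of the set {p₁p₂ − i₁p₂ − i₂p₁ : i₁, i₂ ∈ ℤ, 0 < i₁ < p₁, 0 < i₂ < p₂, i₁p₂ + i₂p₁ < p₁p₂}; that is, this set is nonempty, contains d, and all of its elements are ≥ d. -/
/-- For integers `p₁, p₂ ≥ 2` with `d = gcd(p₁, p₂) < min(p₁, p₂)`, the number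
`d` is the minimum of the set of values `p₁p₂ − i₁p₂ − i₂p₁` over integer
points `(i₁, i₂)` with `0 < i₁ < p₁`, `0 < i₂ < p₂` and
`i₁p₂ + i₂p₁ < p₁p₂` (the jumps of Milnor numbers of monomial deformations of
`z₁^{p₁} + z₂^{p₂}`). -/
theorem gcd_is_least_jump (p₁ p₂ : ℤ) (h₁ : 2 ≤ p₁) (h₂ : 2 ≤ p₂)
    (hd : (Int.gcd p₁ p₂ : ℤ) < min p₁ p₂) :
    IsLeast
      {v : ℤ | ∃ i₁ i₂ : ℤ, 0 < i₁ ∧ i₁ < p₁ ∧ 0 < i₂ ∧ i₂ < p₂ ∧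
        i₁ * p₂ + i₂ * p₁ < p₁ * p₂ ∧ v = p₁ * p₂ - i₁ * p₂ - i₂ * p₁}
      (Int.gcd p₁ p₂ : ℤ) := by
  set d : ℤ := (Int.gcd p₁ p₂ : ℤ) with hdef
  have hp₁ : (0:ℤ) < p₁ := by linarith
  have hp₂ : (0:ℤ) < p₂ := by linarith
  have hd1 : d < p₁ := lt_of_lt_of_le hd (min_le_left _ _)
  have hd2 : d < p₂ := lt_of_lt_of_le hd (min_le_right _ _)
  have hdpos : 0 < d := by
    have : p₁.gcd p₂ ≠ 0 := by
      simp [Int.gcd_eq_zero_iff]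
      omega
    rw [hdef]
    exact_mod_cast Nat.pos_of_ne_zero this
  have hdvd1 : d ∣ p₁ := Int.gcd_dvd_left p₁ p₂
  have hdvd2 : d ∣ p₂ := Int.gcd_dvd_right p₁ p₂
  constructor
  · -- membership
    have hbezout : d = p₁ * Int.gcdA p₁ p₂ + p₂ * Int.gcdB p₁ p₂ :=
      Int.gcd_eq_gcd_ab p₁ p₂
    set x0 : ℤ := -Int.gcdB p₁ p₂ with hx0
    set i₁ : ℤ := x0 % p₁ with hi1
    have hdiff : p₁ ∣ (x0 - i₁) :=
      ⟨x0 / p₁, by linarith [Int.mul_ediv_add_emod x0 p₁]⟩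
    have hmod : p₁ ∣ (i₁ * p₂ + d) := by
      have h3 : p₁ ∣ (x0 * p₂ + d) := ⟨Int.gcdA p₁ p₂, by rw [hx0]; linear_combination hbezout⟩
      have h4 : i₁ * p₂ + d = (x0 * p₂ + d) - (x0 - i₁) * p₂ := by ring
      rw [h4]
      exact dvd_sub h3 (hdiff.mul_right p₂)
    have hi1nonneg : 0 ≤ i₁ := Int.emod_nonneg x0 (by omega)
    have hi1lt : i₁ < p₁ := Int.emod_lt_of_pos x0 hp₁
    have hi1pos : 0 < i₁ := by
      rcases lt_or_eq_of_le hi1nonneg with h | h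
      · exact h
      · exfalso
        rw [← h] at hmod
        simp only [zero_mul, zero_add] at hmod
        have := Int.le_of_dvd hdpos hmod
        omega
    have hdvd : p₁ ∣ (p₁ * p₂ - d - i₁ * p₂) := by
      have heq : p₁ * p₂ - d - i₁ * p₂ = p₁ * p₂ - (i₁ * p₂ + d) := by ring
      rw [heq]
      exact dvd_sub ⟨p₂, rfl⟩ hmod
    obtain ⟨i₂, hi2⟩ := hdvd
    have key : i₂ * p₁ = p₁ * p₂ - d - i₁ * p₂ := by linarith [hi2]
    have hlow : p₂ * 1 ≤ p₂ * (p₁ - i₁) :=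
      mul_le_mul_of_nonneg_left (by omega) hp₂.le
    have hprod : 0 < i₂ * p₁ := by nlinarith
    have hi2pos : 0 < i₂ := by
      by_contra h
      push_neg at h
      have : i₂ * p₁ ≤ 0 := mul_nonpos_of_nonpos_of_nonneg h hp₁.le
      linarith
    have hi2lt : i₂ < p₂ := by
      have h5 : i₂ * p₁ < p₂ * p₁ := by nlinarith
      exact lt_of_mul_lt_mul_right h5 hp₁.le
    exact ⟨i₁, i₂, hi1pos, hi1lt, hi2pos, hi2lt, by linarith, by linarith⟩
  · -- lower bound
    rintro v ⟨i₁, i₂, h1, h2, h3, h4, h5, rfl⟩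
    have hvpos : 0 < p₁ * p₂ - i₁ * p₂ - i₂ * p₁ := by linarith
    have hdvdv : d ∣ (p₁ * p₂ - i₁ * p₂ - i₂ * p₁) := by
      exact dvd_sub (dvd_sub (hdvd1.mul_right p₂) (hdvd2.mul_left i₁))
        (hdvd1.mul_left i₂)
    exact Int.le_of_dvd hvpos hdvdv
end

section
/- Let p₁, p₂ ≥ 2 be integers and let d = gcd(p₁,p₂). Consider the set M = {p₁p₂ − i₁p₂ − i₂p₁ : i₁, i₂ ∈ ℤ, 0 < i₁ < p₁, 0 < i₂ < p₂, i₁p₂ + i₂p₁ < p₁p₂} ∪ {p₁ − 1, p₂ − 1}. Then the minimum of M equals d if d < min(p₁,p₂), and equals d − 1 if d = min(p₁,p₂). -/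
/-- Bodin–Walewska formula for the non-degenerate jump of the Milnor number of
`z₁^{p₁} + z₂^{p₂}`: with `d = gcd(p₁, p₂)` and
`M = {p₁p₂ − i₁p₂ − i₂p₁ : 0 < i₁ < p₁, 0 < i₂ < p₂, i₁p₂ + i₂p₁ < p₁p₂}
∪ {p₁ − 1, p₂ − 1}`, the minimum of `M` is `d` if `d < min(p₁,p₂)` and `d − 1`
if `d = min(p₁,p₂)`. -/
theorem jump_brieskorn_pham_two_vars (p₁ p₂ : ℤ) (h₁ : 2 ≤ p₁) (h₂ : 2 ≤ p₂) :
    ((Int.gcd p₁ p₂ : ℤ) < min p₁ p₂ →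
      IsLeast
        ({v : ℤ | ∃ i₁ i₂ : ℤ, 0 < i₁ ∧ i₁ < p₁ ∧ 0 < i₂ ∧ i₂ < p₂ ∧
            i₁ * p₂ + i₂ * p₁ < p₁ * p₂ ∧ v = p₁ * p₂ - i₁ * p₂ - i₂ * p₁} ∪
          {p₁ - 1, p₂ - 1})
        (Int.gcd p₁ p₂ : ℤ)) ∧
    ((Int.gcd p₁ p₂ : ℤ) = min p₁ p₂ →
      IsLeast
        ({v : ℤ | ∃ i₁ i₂ : ℤ, 0 < i₁ ∧ i₁ < p₁ ∧ 0 < i₂ ∧ i₂ < p₂ ∧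
            i₁ * p₂ + i₂ * p₁ < p₁ * p₂ ∧ v = p₁ * p₂ - i₁ * p₂ - i₂ * p₁} ∪
          {p₁ - 1, p₂ - 1})
        ((Int.gcd p₁ p₂ : ℤ) - 1)) := by
  have hp₁0 : (0:ℤ) < p₁ := by linarith
  have hp₂0 : (0:ℤ) < p₂ := by linarith
  set d : ℤ := (Int.gcd p₁ p₂ : ℤ) with hd
  have hd0 : 0 < d := by
    rw [hd]
    have : Int.gcd p₁ p₂ ≠ 0 := by
      simp [Int.gcd_eq_zero_iff]
      intro h; omega
    exact_mod_cast Nat.pos_of_ne_zero this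
  have hdvd₁ : d ∣ p₁ := Int.gcd_dvd_left p₁ p₂
  have hdvd₂ : d ∣ p₂ := Int.gcd_dvd_right p₁ p₂
  have htri : ∀ v : ℤ, (∃ i₁ i₂ : ℤ, 0 < i₁ ∧ i₁ < p₁ ∧ 0 < i₂ ∧ i₂ < p₂ ∧
      i₁ * p₂ + i₂ * p₁ < p₁ * p₂ ∧ v = p₁ * p₂ - i₁ * p₂ - i₂ * p₁) → d ≤ v := by
    rintro v ⟨i₁, i₂, hi1, hi2, hi3, hi4, hi5, rfl⟩
    have hdv : d ∣ p₁ * p₂ - i₁ * p₂ - i₂ * p₁ :=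
      dvd_sub (dvd_sub (hdvd₁.mul_right p₂) (hdvd₂.mul_left i₁)) (hdvd₁.mul_left i₂)
    exact Int.le_of_dvd (by linarith) hdv
  constructor
  · -- case d < min p₁ p₂
    intro hlt
    have hdp₁ : d < p₁ := lt_of_lt_of_le hlt (min_le_left _ _)
    have hdp₂ : d < p₂ := lt_of_lt_of_le hlt (min_le_right _ _)
    constructor
    · -- membership
      left
      have hbez : d = p₁ * Int.gcdA p₁ p₂ + p₂ * Int.gcdB p₁ p₂ := by
        rw [hd]; exact Int.gcd_eq_gcd_ab p₁ p₂
      set A := Int.gcdA p₁ p₂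
      set B := Int.gcdB p₁ p₂
      set i₁ : ℤ := (-B) % p₁ with hi₁def
      have hi₁nonneg : 0 ≤ i₁ := Int.emod_nonneg _ hp₁0.ne'
      have hi₁lt : i₁ < p₁ := Int.emod_lt_of_pos _ hp₁0
      set c : ℤ := A - ((-B) / p₁) * p₂ with hcdef
      have key : i₁ * p₂ + d = p₁ * c := by
        rw [hi₁def, hcdef, hbez, Int.emod_def]; ring
      have hi₁pos : 0 < i₁ := by
        rcases lt_or_eq_of_le hi₁nonneg with h | h
        · exact h
        · exfalso
          have : p₁ ∣ d := ⟨c, by rw [← key, ← h]; ring⟩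
          have := Int.le_of_dvd hd0 this
          linarith
      refine ⟨i₁, p₂ - c, hi₁pos, hi₁lt, ?_, ?_, ?_, ?_⟩
      · -- 0 < p₂ - c
        have h1 : i₁ ≤ p₁ - 1 := by omega
        have h2 : i₁ * p₂ ≤ (p₁ - 1) * p₂ := by nlinarith
        have h3 : (p₂ - c) * p₁ = p₁ * p₂ - i₁ * p₂ - d := by linarith [key]
        have h4 : 0 < (p₂ - c) * p₁ := by nlinarith
        nlinarith
      · -- p₂ - c < p₂
        have h3 : (p₂ - c) * p₁ = p₁ * p₂ - i₁ * p₂ - d := by linarith [key]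
        have h4 : (p₂ - c) * p₁ < p₂ * p₁ := by nlinarith
        exact lt_of_mul_lt_mul_right h4 hp₁0.le
      · linarith [key]
      · linarith [key]
    · -- lower bound
      rintro v (hv | hv)
      · exact htri v hv
      · rcases hv with rfl | rfl <;> omega
  · -- case d = min p₁ p₂
    intro heq
    rcases min_cases p₁ p₂ with ⟨hm, hle⟩ | ⟨hm, hle⟩
    · -- d = p₁, p₁ ≤ p₂
      have hdp : d = p₁ := by rw [heq, hm]
      constructor
      · right; left; omega
      · rintro v (hv | hv)
        · linarith [htri v hv]
        · rcases hv with rfl | rfl <;> omega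
    · -- d = p₂, p₂ < p₁
      have hdp : d = p₂ := by rw [heq, hm]
      constructor
      · right; right; simp only [Set.mem_singleton_iff]; omega
      · rintro v (hv | hv)
        · linarith [htri v hv]
        · rcases hv with rfl | rfl <;> omega
end
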